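/- Let C be an F[x]-submodule of V = R_1 × ⋯ × R_ℓ generated by elements g_1, …, g_ρ ∈ V, and for each 1 ≤ i ≤ ℓ let g_i(x) be the monic gcd in F[x] of x^{m_i} − λ_i together with polynomial representatives of π_i(g_1), …, π_i(g_ρ). If the polynomials (x^{m_1} − λ_1)/g_1(x), …, (x^{m_ℓ} − λ_ℓ)/g_ℓ(x) are pairwise coprime in F[x], and if moreover λ_i ≠ λ_i^{−1} (equivalently λ_i² ≠ 1) for every 1 ≤ i ≤ ℓ, then C is LCD, i.e., C ∩ C^⊥ = {0}. -/

import Mathlib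

/-!
STATEMENT 2 (Corollary `corr`): under pairwise coprimality of the (x^{mᵢ} − λᵢ)/gᵢ(x),
if moreover λᵢ ≠ λᵢ⁻¹ (equivalently λᵢ² ≠ 1) for all i, then C is LCD: C ∩ C^⊥ = {0}
(expressed in coefficient form through the blockwise identification `blk`).
-/

open Polynomial

section MTHelpers
open Finset
variable {F : Type*} [Field F]
open Polynomial Finset

variable {F : Type*} [Field F]

lemma coeff_sum_range {m : ℕ} (v : ℕ → F) (k : ℕ) (hk : k < m) :
    (∑ j ∈ Finset.range m, C (v j) * X ^ j).coeff k = v k := by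
  rw [finset_sum_coeff]
  simp only [coeff_C_mul, coeff_X_pow]
  rw [Finset.sum_eq_single k]
  · simp
  · intro j _ hj; simp [hj, Ne.symm hj]
  · intro h; exact absurd (Finset.mem_range.2 hk) h

lemma natDegree_sum_range_le {m : ℕ} (hm : 1 ≤ m) (v : ℕ → F) :
    (∑ j ∈ Finset.range m, C (v j) * X ^ j).natDegree ≤ m - 1 := by
  apply natDegree_le_iff_coeff_eq_zero.2
  intro N hN
  rw [finset_sum_coeff]
  apply Finset.sum_eq_zero
  intro j hj
  simp only [coeff_C_mul, coeff_X_pow]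
  rw [if_neg, mul_zero]
  intro h; subst h
  exact absurd (Finset.mem_range.1 hj) (by omega)

lemma sum_coeff_eq_self {m : ℕ} (R : F[X]) (hR : R.natDegree < m) :
    ∑ k : Fin m, C (R.coeff k) * X ^ (k : ℕ) = R := by
  conv_rhs => rw [R.as_sum_range' m hR]
  rw [Fin.sum_univ_eq_sum_range (fun k => C (R.coeff k) * X ^ k)]
  exact Finset.sum_congr rfl fun k _ => C_mul_X_pow_eq_monomial

-- L0
lemma coeff_modByMonic_top {m : ℕ} (hm : 1 ≤ m) (lam : F) (A : F[X])
    (hA : A.natDegree ≤ 2 * m - 2) :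
    (A %ₘ (X ^ m - C lam)).coeff (m - 1) = A.coeff (m - 1) := by
  set f : F[X] := X ^ m - C lam with hf
  have hfm : f.Monic := monic_X_pow_sub_C lam (by omega)
  have hfd : f.natDegree = m := by
    rw [hf, natDegree_X_pow_sub_C]
  by_cases hdeg : A.degree < f.degree
  · rw [(modByMonic_eq_self_iff hfm).2 hdeg]
  · have hmA : m ≤ A.natDegree := by
      rw [← hfd]
      exact natDegree_le_natDegree (le_of_not_gt hdeg)
    have hm2 : 2 ≤ m := by omega
    have hQ : (A /ₘ f).natDegree = A.natDegree - m := by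
      rw [natDegree_divByMonic A hfm, hfd]
    rw [modByMonic_eq_sub_mul_div A f, coeff_sub]
    have h1 : (f * (A /ₘ f)).coeff (m - 1) = 0 := by
      rw [hf, sub_mul, coeff_sub, mul_comm (X ^ m) (A /ₘ f), coeff_mul_X_pow',
        if_neg (by omega), coeff_C_mul, coeff_eq_zero_of_natDegree_lt (by rw [hQ]; omega), mul_zero,
        sub_zero]
    rw [h1, sub_zero]

lemma modByMonic_congr {q : F[X]} (hq : q.Monic) {A B : F[X]} (h : q ∣ A - B) :
    A %ₘ q = B %ₘ q := by
  rw [← sub_eq_zero, ← sub_modByMonic, (modByMonic_eq_zero_iff_dvd hq).2 h]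

lemma dvd_sub_modByMonic {q : F[X]} (hq : q.Monic) (A : F[X]) : q ∣ A - A %ₘ q := by
  rw [modByMonic_eq_sub_mul_div A q, sub_sub_cancel]
  exact Dvd.intro _ rfl

lemma my_natDegree_reflect_le {N : ℕ} {p : F[X]} (hp : p.natDegree ≤ N) :
    (reflect N p).natDegree ≤ N := by
  apply natDegree_le_iff_coeff_eq_zero.2
  intro j hj
  rw [coeff_reflect, revAt_eq_self_of_lt hj]
  exact coeff_eq_zero_of_natDegree_lt (lt_of_le_of_lt hp hj)

lemma natDeg_le_pred {m : ℕ} {P : F[X]} (h : P.degree < (m : ℕ)) : P.natDegree ≤ m - 1 := by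
  rcases eq_or_ne P 0 with rfl | h0
  · simp
  · have h1 := (natDegree_lt_iff_degree_lt h0).2 h
    omega

lemma block_lcd {m : ℕ} (hm : 1 ≤ m) {lam : F} (hlam : lam ≠ 0) (hlam2 : lam ^ 2 ≠ 1)
    {g : F[X]} (hg : g.Monic) (hgf : g ∣ X ^ m - C lam)
    (v : ℕ → F)
    (hdvd : g ∣ ∑ k ∈ Finset.range m, C (v k) * X ^ k)
    (horth : ∀ t < m, ∑ k ∈ Finset.range m,
      v k * ((X ^ t * g) %ₘ (X ^ m - C lam)).coeff k = 0) :
    ∀ k < m, v k = 0 := by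
  set f : F[X] := X ^ m - C lam with hfdef
  have hfm : f.Monic := monic_X_pow_sub_C lam (by omega)
  have hfd : f.natDegree = m := by rw [hfdef, natDegree_X_pow_sub_C]
  have hfdeg : f.degree = (m : ℕ) := by rw [hfdef]; exact degree_X_pow_sub_C (by omega) lam
  set Pv : F[X] := ∑ k ∈ Finset.range m, C (v k) * X ^ k with hPv
  have hPvdeg : Pv.natDegree ≤ m - 1 := natDegree_sum_range_le hm v
  set vstar : F[X] := reflect (m - 1) Pv with hvstar
  have hvsdeg : vstar.natDegree ≤ m - 1 := my_natDegree_reflect_le hPvdeg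
  set P : F[X] := (vstar * g) %ₘ f with hP
  have hPdeg : P.degree < (m : ℕ) := hfdeg ▸ degree_modByMonic_lt _ hfm
  have hPnd : P.natDegree ≤ m - 1 := natDeg_le_pred hPdeg
  have key : ∀ t < m, P.coeff (m - 1 - t) = 0 := by
    intro t ht
    set R : F[X] := (X ^ t * g) %ₘ f with hR
    have hRnd : R.natDegree ≤ m - 1 :=
      natDeg_le_pred (hfdeg ▸ degree_modByMonic_lt _ hfm)
    have e1 : (X ^ t * P) %ₘ f = (vstar * R) %ₘ f := by
      apply modByMonic_congr hfm
      have d1 : f ∣ vstar * g - P := dvd_sub_modByMonic hfm _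
      have d2 : f ∣ X ^ t * g - R := dvd_sub_modByMonic hfm _
      have hrw : X ^ t * P - vstar * R
          = vstar * (X ^ t * g - R) - X ^ t * (vstar * g - P) := by ring
      rw [hrw]
      exact dvd_sub (d2.mul_left _) (d1.mul_left _)
    have e2 : ((X ^ t * P) %ₘ f).coeff (m - 1) = P.coeff (m - 1 - t) := by
      rw [hfdef]
      rw [coeff_modByMonic_top hm lam _ (le_trans (natDegree_mul_le)
        (by rw [natDegree_X_pow]; omega))]
      rw [mul_comm, coeff_mul_X_pow', if_pos (by omega)]
    have e4 : ((vstar * R) %ₘ f).coeff (m - 1) = (vstar * R).coeff (m - 1) := by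
      rw [hfdef]
      exact coeff_modByMonic_top hm lam _ (le_trans natDegree_mul_le (by omega))
    have e5 : (vstar * R).coeff (m - 1)
        = ∑ k ∈ Finset.range m, vstar.coeff (m - 1 - k) * R.coeff k := by
      rw [coeff_mul, Finset.Nat.sum_antidiagonal_eq_sum_range_succ
        (fun a b => vstar.coeff a * R.coeff b)]
      rw [Nat.succ_eq_add_one, show m - 1 + 1 = m by omega]
      rw [← Finset.sum_range_reflect (fun k => vstar.coeff (m - 1 - k) * R.coeff k) m]
      refine Finset.sum_congr rfl fun j hj => ?_
      have hj' : j < m := Finset.mem_range.1 hj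
      have hjj : m - 1 - (m - 1 - j) = j := by omega
      rw [hjj]
    have e6 : ∀ k < m, vstar.coeff (m - 1 - k) = v k := by
      intro k hk
      rw [hvstar, coeff_reflect, revAt_le (by omega : m - 1 - k ≤ m - 1),
        show m - 1 - (m - 1 - k) = k by omega, hPv]
      exact coeff_sum_range v k hk
    rw [← e2, e1, e4, e5]
    rw [Finset.sum_congr rfl fun k hk => by
      rw [e6 k (Finset.mem_range.1 hk)]]
    exact horth t ht
  have hP0 : P = 0 := by
    apply Polynomial.ext
    intro j
    rw [coeff_zero]
    by_cases hj : j < m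
    · have := key (m - 1 - j) (by omega)
      rwa [show m - 1 - (m - 1 - j) = j by omega] at this
    · exact coeff_eq_zero_of_degree_lt
        (lt_of_lt_of_le hPdeg (by exact_mod_cast Nat.le_of_not_lt hj))
  have hfdvd : f ∣ vstar * g := (modByMonic_eq_zero_iff_dvd hfm).1 hP0
  obtain ⟨u, hu⟩ := hdvd
  obtain ⟨h, hh⟩ := hgf
  have hg0 : g ≠ 0 := hg.ne_zero
  have hhm : h.Monic := hg.of_mul_monic_left (hh ▸ hfm)
  have hmono : m = g.natDegree + h.natDegree := by
    rw [← hfd, hh, natDegree_mul hg0 hhm.ne_zero]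
  suffices hPv0 : Pv = 0 by
    intro k hk
    rw [← coeff_sum_range v k hk, ← hPv, hPv0, coeff_zero]
  by_contra hPvne
  have hu0 : u ≠ 0 := fun h0 => hPvne (by rw [hu, h0, mul_zero])
  have hdgu : g.natDegree + u.natDegree ≤ m - 1 := by
    rw [← natDegree_mul hg0 hu0, ← hu]; exact hPvdeg
  have hrefl : vstar = reflect g.natDegree g * reflect (m - 1 - g.natDegree) u := by
    rw [hvstar, hu, ← reflect_mul g u le_rfl (by omega : u.natDegree ≤ m - 1 - g.natDegree)]
    congr 1
    omega
  have hhvs : h ∣ vstar := by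
    obtain ⟨q, hq⟩ := hfdvd
    refine ⟨q, mul_left_cancel₀ hg0 ?_⟩
    rw [mul_comm g vstar, hq, hh]
    ring
  have hgstar_dvd : reflect g.natDegree g ∣ X ^ m - C lam⁻¹ := by
    have hreflf : reflect m f = reflect g.natDegree g * reflect h.natDegree h := by
      rw [hh, ← reflect_mul g h le_rfl le_rfl, ← hmono]
    have hcompute : reflect m f = (-C lam) * (X ^ m - C lam⁻¹) := by
      rw [hfdef, sub_eq_add_neg, reflect_add, reflect_monomial, revAt_le le_rfl,
        Nat.sub_self, pow_zero, ← C_neg, reflect_C]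
      rw [mul_sub, ← C_mul, neg_mul, mul_inv_cancel₀ hlam]
      simp only [C_neg, C_1]
      ring
    refine ⟨reflect h.natDegree h * (-C lam⁻¹), ?_⟩
    have hXm : X ^ m - C lam⁻¹ = (-C lam⁻¹) * reflect m f := by
      rw [hcompute, ← mul_assoc, neg_mul_neg, ← C_mul, inv_mul_cancel₀ hlam, C_1, one_mul]
    rw [hXm, hreflf]
    ring
  have hc : lam - lam⁻¹ ≠ 0 := by
    intro h0
    apply hlam2
    have hle : lam = lam⁻¹ := sub_eq_zero.1 h0
    rw [sq]
    nth_rewrite 2 [hle]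
    exact mul_inv_cancel₀ hlam
  have hcop2 : IsCoprime (X ^ m - C lam) (X ^ m - C lam⁻¹) := by
    refine ⟨-C (lam - lam⁻¹)⁻¹, C (lam - lam⁻¹)⁻¹, ?_⟩
    have hrw : (-C (lam - lam⁻¹)⁻¹) * (X ^ m - C lam) + C (lam - lam⁻¹)⁻¹ * (X ^ m - C lam⁻¹)
        = C (lam - lam⁻¹)⁻¹ * (C lam - C lam⁻¹) := by ring
    rw [hrw, ← C_sub, ← C_mul, inv_mul_cancel₀ hc, C_1]
  have hcoph : IsCoprime h (reflect g.natDegree g) := by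
    have h1 : h ∣ X ^ m - C lam := ⟨g, by rw [← hfdef, hh]; ring⟩
    exact (hcop2.of_isCoprime_of_dvd_left h1).of_isCoprime_of_dvd_right hgstar_dvd
  have hhdvdu : h ∣ reflect (m - 1 - g.natDegree) u :=
    hcoph.dvd_of_dvd_mul_left (hrefl ▸ hhvs)
  have hustar0 : reflect (m - 1 - g.natDegree) u = 0 := by
    by_contra hne
    have h1 : h.natDegree ≤ (reflect (m - 1 - g.natDegree) u).natDegree :=
      natDegree_le_of_dvd hhdvdu hne
    have h2 : (reflect (m - 1 - g.natDegree) u).natDegree ≤ m - 1 - g.natDegree :=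
      my_natDegree_reflect_le (by omega)
    omega
  exact hu0 (reflect_eq_zero_iff.1 hustar0)


lemma sum_dite_fin {M : Type*} [AddCommMonoid M] {m : ℕ} (w : Fin m → F) (G : ℕ → F → M) :
    ∑ k ∈ Finset.range m, G k (if h : k < m then w ⟨k, h⟩ else 0) = ∑ k : Fin m, G k (w k) := by
  rw [← Fin.sum_univ_eq_sum_range (fun k => G k (if h : k < m then w ⟨k, h⟩ else 0)) m]
  exact Finset.sum_congr rfl fun k _ => by simp [dif_pos k.isLt]

end MTHelpers

theorem stmt2 (F : Type*) [Field F] [Fintype F]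
    (ℓ : ℕ) (hℓ : 1 ≤ ℓ)
    (m : Fin ℓ → ℕ) (hm : ∀ i, 1 ≤ m i)
    (lam : Fin ℓ → F) (hlam : ∀ i, lam i ≠ 0)
    (hlam2 : ∀ i, lam i ^ 2 ≠ 1)
    (f : Fin ℓ → Polynomial F) (hf : ∀ i, f i = X ^ (m i) - C (lam i))
    (blk : ∀ i, (Fin (m i) → F) → Polynomial F ⧸ Ideal.span {f i})
    (hblk : ∀ i b, blk i b
      = Ideal.Quotient.mk (Ideal.span {f i}) (∑ k : Fin (m i), C (b k) * X ^ (k : ℕ)))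
    (ρ : ℕ) (gen : Fin ρ → Π i, Polynomial F ⧸ Ideal.span {f i})
    (Ccode : Submodule (Polynomial F) (Π i, Polynomial F ⧸ Ideal.span {f i}))
    (hC : Ccode = Submodule.span (Polynomial F) (Set.range gen))
    (g : Fin ℓ → Polynomial F)
    (hgmonic : ∀ i, (g i).Monic)
    (hgdvd : ∀ i, g i ∣ f i)
    (hgspan : ∀ i, Submodule.map (LinearMap.proj i :
        (Π j, Polynomial F ⧸ Ideal.span {f j}) →ₗ[Polynomial F] Polynomial F ⧸ Ideal.span {f i})
        Ccode
      = Submodule.span (Polynomial F) {Ideal.Quotient.mk (Ideal.span {f i}) (g i)})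
    (hcop : ∀ i j, i ≠ j → IsCoprime (f i / g i) (f j / g j)) :
    -- C is LCD: C ∩ C^⊥ = {0}
    ∀ a : Π i, Fin (m i) → F,
      (fun i => blk i (a i)) ∈ Ccode →
      (∀ b : Π i, Fin (m i) → F, (fun i => blk i (b i)) ∈ Ccode →
        ∑ i, ∑ k, a i k * b i k = 0) →
      a = 0 := by
  intro a ha haorth
  have hfm : ∀ i, (f i).Monic := fun i =>
    (hf i) ▸ monic_X_pow_sub_C _ (by have := hm i; omega)
  have hfg : ∀ i, g i * (f i / g i) = f i := fun i =>
    EuclideanDomain.mul_div_cancel' (hgmonic i).ne_zero (hgdvd i)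
  have hfdeg : ∀ i, (f i).degree = (m i : ℕ) := fun i => by
    rw [hf i]; exact degree_X_pow_sub_C (by have := hm i; omega) _
  -- Step 1: delta elements
  have hdelta : ∀ i : Fin ℓ, ∃ d, d ∈ Ccode ∧
      d i = Ideal.Quotient.mk (Ideal.span {f i}) (g i) ∧ ∀ j, j ≠ i → d j = 0 := by
    intro i
    have h1 : Ideal.Quotient.mk (Ideal.span {f i}) (g i) ∈ Submodule.map
        (LinearMap.proj i : (Π j, Polynomial F ⧸ Ideal.span {f j}) →ₗ[Polynomial F]
          Polynomial F ⧸ Ideal.span {f i}) Ccode := by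
      rw [hgspan i]; exact Submodule.mem_span_singleton_self _
    obtain ⟨c, hc, hci⟩ := Submodule.mem_map.1 h1
    have hci' : c i = Ideal.Quotient.mk (Ideal.span {f i}) (g i) := hci
    have h2 : ∀ j, ∃ q : Polynomial F,
        c j = Ideal.Quotient.mk (Ideal.span {f j}) (q * g j) := by
      intro j
      have hmem : c j ∈ Submodule.map (LinearMap.proj j :
          (Π k, Polynomial F ⧸ Ideal.span {f k}) →ₗ[Polynomial F]
          Polynomial F ⧸ Ideal.span {f j}) Ccode :=
        Submodule.mem_map_of_mem hc
      rw [hgspan j] at hmem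
      obtain ⟨q, hq⟩ := Submodule.mem_span_singleton.1 hmem
      exact ⟨q, hq.symm⟩
    choose q hq using h2
    set H : Polynomial F := ∏ j ∈ Finset.univ.erase i, (f j / g j) with hH
    have hcopH : IsCoprime (f i / g i) H :=
      IsCoprime.prod_right fun j hj =>
        hcop i j fun h => (Finset.ne_of_mem_erase hj) h.symm
    obtain ⟨uu, ww, huw⟩ := hcopH
    refine ⟨(ww * H) • c, Submodule.smul_mem _ _ hc, ?_, ?_⟩
    · show (ww * H) • c i = _
      rw [hci']
      show Ideal.Quotient.mk (Ideal.span {f i}) (ww * H * g i) = _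
      rw [Ideal.Quotient.eq, Ideal.mem_span_singleton]
      exact ⟨-uu, by linear_combination (g i) * huw - uu * (hfg i)⟩
    · intro j hj
      show (ww * H) • c j = 0
      rw [hq j]
      show Ideal.Quotient.mk (Ideal.span {f j}) (ww * H * (q j * g j)) = 0
      rw [Ideal.Quotient.eq_zero_iff_mem, Ideal.mem_span_singleton]
      have hjmem : j ∈ Finset.univ.erase i := Finset.mem_erase.2 ⟨hj, Finset.mem_univ j⟩
      have hHsplit := Finset.mul_prod_erase _ (fun k => f k / g k) hjmem
      refine ⟨ww * (∏ k ∈ (Finset.univ.erase i).erase j, (f k / g k)) * q j, ?_⟩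
      rw [hH]
      linear_combination (-(ww * q j * g j)) * hHsplit +
        (ww * (∏ k ∈ (Finset.univ.erase i).erase j, (f k / g k)) * q j) * (hfg j)
  -- divisibility of the polynomial of a i by g i
  have hadvd : ∀ i, g i ∣ ∑ k : Fin (m i), C (a i k) * X ^ (k : ℕ) := by
    intro i
    have hmem : blk i (a i) ∈ Submodule.map (LinearMap.proj i :
        (Π j, Polynomial F ⧸ Ideal.span {f j}) →ₗ[Polynomial F]
        Polynomial F ⧸ Ideal.span {f i}) Ccode :=
      Submodule.mem_map_of_mem ha
    rw [hgspan i] at hmem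
    obtain ⟨qq, hqq⟩ := Submodule.mem_span_singleton.1 hmem
    rw [hblk i] at hqq
    have hdiff : f i ∣ qq * g i - ∑ k : Fin (m i), C (a i k) * X ^ (k : ℕ) := by
      rw [← Ideal.mem_span_singleton, ← Ideal.Quotient.eq]
      exact hqq
    obtain ⟨r, hr⟩ := hdiff
    have hrw : ∑ k : Fin (m i), C (a i k) * X ^ (k : ℕ) = qq * g i - f i * r := by
      linear_combination -hr
    rw [hrw]
    exact dvd_sub (Dvd.dvd.mul_left dvd_rfl qq) ((hgdvd i).mul_right r)
  -- blockwise orthogonality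
  have hborth : ∀ i, ∀ t, t < m i → ∑ k : Fin (m i),
      a i k * ((X ^ t * g i) %ₘ f i).coeff k = 0 := by
    intro i t ht
    obtain ⟨d, hd, hdi, hdj⟩ := hdelta i
    set R : Polynomial F := (X ^ t * g i) %ₘ f i with hR
    have hRnd : R.natDegree < m i := by
      have h1 : R.natDegree ≤ m i - 1 :=
        natDeg_le_pred ((hfdeg i) ▸ degree_modByMonic_lt (X ^ t * g i) (hfm i))
      have := hm i
      omega
    set b : Π j, Fin (m j) → F :=
      Function.update (fun j => (0 : Fin (m j) → F)) i (fun k : Fin (m i) => R.coeff (k : ℕ)) with hb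
    have hbmem : (fun j => blk j (b j)) = (X ^ t : Polynomial F) • d := by
      funext j
      by_cases hji : j = i
      · subst hji
        have hbj : b j = fun k : Fin (m j) => R.coeff (k : ℕ) := Function.update_self _ _ _
        rw [hbj, hblk, sum_coeff_eq_self R hRnd]
        show _ = (X ^ t : Polynomial F) • d j
        rw [hdi]
        show _ = Ideal.Quotient.mk (Ideal.span {f j}) (X ^ t * g j)
        rw [Ideal.Quotient.eq, Ideal.mem_span_singleton, ← neg_sub]
        exact (dvd_sub_modByMonic (hfm j) _).neg_right
      · have hbj : b j = 0 := Function.update_of_ne hji _ _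
        show blk j (b j) = (X ^ t : Polynomial F) • d j
        rw [hdj j hji, smul_zero, hbj, hblk]
        simp
    have hsum := haorth b (hbmem ▸ Submodule.smul_mem _ _ hd)
    have h0 : ∀ j ∈ Finset.univ, j ≠ i → ∑ k, a j k * b j k = 0 := by
      intro j _ hj
      have hbj : b j = 0 := Function.update_of_ne hj _ _
      simp [hbj]
    rw [Finset.sum_eq_single_of_mem i (Finset.mem_univ i) h0] at hsum
    have hbi : b i = fun k : Fin (m i) => R.coeff (k : ℕ) := Function.update_self _ _ _
    rw [hbi] at hsum
    exact hsum
  -- conclude via the single-block lemma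
  funext i k
  have hres := block_lcd (hm i) (hlam i) (hlam2 i) (hgmonic i) ((hf i) ▸ hgdvd i)
    (fun n => if h : n < m i then a i ⟨n, h⟩ else 0)
    (by rw [sum_dite_fin (a i) (fun n x => C x * X ^ n)]
        exact hadvd i)
    (by intro t ht
        rw [← hf i, sum_dite_fin (a i) (fun n x => x * ((X ^ t * g i) %ₘ f i).coeff n)]
        exact hborth i t ht)
    (k : ℕ) k.isLt
  simpa using hres
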